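/- Let X be a first-countable topological space, (f_n)_{n∈ℕ} a sequence of functions from X to the extended reals [−∞,+∞], and f : X → [−∞,+∞]. Suppose that for every x ∈ X the infimum over all sequences (xⁿ) converging to x of limsup_{n→∞} f_n(xⁿ) and the infimum over all such sequences of liminf_{n→∞} f_n(xⁿ) both equal f(x). Then (f_n) Γ-converges to f: for every x ∈ X, sup_{U} limsup_{n→∞} inf_{y∈U} f_n(y) = sup_{U} liminf_{n→∞} inf_{y∈U} f_n(y) = f(x), where U ranges over all neighborhoods of x. -/
import Mathlib


open Filter Topology

/-- If on a first-countable space both the sequential Γ-upper and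
Γ-lower limits of `(f n)` coincide with `f` at every point, then `(f n)` Γ-converges
to `f`:  both the Γ-upper limit and the Γ-lower limit (defined via neighborhoods)
equal `f x` at every `x`. -/
theorem gammaConverges_of_seq_gamma_limits {X : Type*} [TopologicalSpace X]
    [FirstCountableTopology X]
    (f : ℕ → X → EReal) (flim : X → EReal)
    (h1 : ∀ x : X, (⨅ (u : ℕ → X) (_ : Tendsto u atTop (𝓝 x)),
        limsup (fun n => f n (u n)) atTop) = flim x)
    (h2 : ∀ x : X, (⨅ (u : ℕ → X) (_ : Tendsto u atTop (𝓝 x)),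
        liminf (fun n => f n (u n)) atTop) = flim x) :
    ∀ x : X,
      ((⨆ (U : Set X) (_ : U ∈ 𝓝 x),
          limsup (fun n => ⨅ y ∈ U, f n y) atTop) = flim x) ∧
      ((⨆ (U : Set X) (_ : U ∈ 𝓝 x),
          liminf (fun n => ⨅ y ∈ U, f n y) atTop) = flim x) := by
  classical
  intro x
  obtain ⟨U, hU⟩ := (𝓝 x).exists_antitone_basis
  have key : ∀ V ∈ 𝓝 x, ∀ u : ℕ → X, Tendsto u atTop (𝓝 x) →
      (fun n => ⨅ y ∈ V, f n y) ≤ᶠ[atTop] fun n => f n (u n) := by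
    intro V hV u hu
    filter_upwards [hu hV] with n hn
    exact iInf_le_of_le (u n) (iInf_le _ hn)
  have hup : (⨆ V ∈ 𝓝 x, limsup (fun n => ⨅ y ∈ V, f n y) atTop) ≤ flim x := by
    rw [← h1 x]
    refine iSup₂_le fun V hV => le_iInf₂ fun u hu => ?_
    exact limsup_le_limsup (key V hV u hu)
  have hlow_le_up : (⨆ V ∈ 𝓝 x, liminf (fun n => ⨅ y ∈ V, f n y) atTop)
      ≤ ⨆ V ∈ 𝓝 x, limsup (fun n => ⨅ y ∈ V, f n y) atTop :=
    iSup₂_mono fun V _ => liminf_le_limsup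
  have hge : flim x ≤ ⨆ V ∈ 𝓝 x, liminf (fun n => ⨅ y ∈ V, f n y) atTop := by
    by_contra hcon
    push_neg at hcon
    obtain ⟨c, hc1, hc2⟩ := exists_between hcon
    have hfreq : ∀ k : ℕ, ∃ᶠ n in atTop, ∃ y ∈ U k, f n y < c := by
      intro k
      have hlim : liminf (fun n => ⨅ y ∈ U k, f n y) atTop < c :=
        lt_of_le_of_lt (le_iSup₂ (f := fun V (_ : V ∈ 𝓝 x) => liminf (fun n => ⨅ y ∈ V, f n y) atTop) (U k) (hU.1.mem_of_mem trivial)) hc1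
      have := frequently_lt_of_liminf_lt (by isBoundedDefault) hlim
      refine this.mono fun n hn => ?_
      obtain ⟨y, hy⟩ := iInf_lt_iff.mp hn
      obtain ⟨hyU, hlt⟩ := iInf_lt_iff.mp hy
      exact ⟨y, hyU, hlt⟩
    obtain ⟨φ, hφ, hP⟩ := extraction_forall_of_frequently hfreq
    choose y hyU hyf using hP
    set u : ℕ → X := fun n => if h : ∃ k, φ k = n then y h.choose else x with hu_def
    have hu_phi : ∀ k, u (φ k) = y k := by
      intro k
      have h : ∃ j, φ j = φ k := ⟨k, rfl⟩
      simp only [hu_def, dif_pos h]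
      congr 1
      exact hφ.injective h.choose_spec
    have hu_tendsto : Tendsto u atTop (𝓝 x) := by
      rw [hU.1.tendsto_right_iff]
      intro m _
      filter_upwards [eventually_ge_atTop (φ m)] with n hn
      by_cases h : ∃ k, φ k = n
      · rw [show u n = y h.choose from dif_pos h]
        have hm : m ≤ h.choose := by
          have hs := h.choose_spec
          exact hφ.le_iff_le.mp (by rw [hs]; exact hn)
        exact hU.2 hm (hyU _)
      · rw [show u n = x from dif_neg h]
        exact mem_of_mem_nhds (hU.1.mem_of_mem trivial)
    have hfr : ∃ᶠ n in atTop, f n (u n) ≤ c := by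
      refine (hφ.tendsto_atTop).frequently (Frequently.of_forall fun k => ?_)
      rw [hu_phi k]
      exact (hyf k).le
    have hll : liminf (fun n => f n (u n)) atTop ≤ c :=
      liminf_le_of_frequently_le' hfr
    have : flim x ≤ c := by
      rw [← h2 x]
      exact le_trans (iInf₂_le u hu_tendsto) hll
    exact absurd this (not_le.mpr hc2)
  have hlow : (⨆ V ∈ 𝓝 x, liminf (fun n => ⨅ y ∈ V, f n y) atTop) = flim x :=
    le_antisymm (hlow_le_up.trans hup) hge
  exact ⟨le_antisymm hup (hge.trans hlow_le_up), hlow⟩
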